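/- Let F : ℝ → ℝ and t* ∈ ℝ be such that 0 < F(t*) < 1 and F is differentiable at t* with derivative f(t*) > 0; set F̄ = 1 − F and ε̄ = f(t*)/F̄(t*). Let (c_n) and (l_n) be sequences of positive integers with c_n → ∞, l_n → ∞, and c_n · F̄(t*)^{l_n} → 1. Then for all real a < b, c_n · ( F̄(t* + a/l_n)^{l_n} − F̄(t* + b/l_n)^{l_n} ) converges, as n → ∞, to exp(−ε̄ a) − exp(−ε̄ b), which equals ∫_a^b ε̄ exp(−ε̄ x) dx. (This is the convergence of the expected number of scaled row minima l_n(∧_i − t*) falling in the interval (a, b] to the mean measure of the Poisson process with intensity λ(x) = ε̄ exp(−ε̄ x).) -/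

import Mathlib

open Filter

open Topology in
lemma key_tendsto (F : ℝ → ℝ) (tstar fstar : ℝ)
    (h1 : F tstar < 1) (hd : HasDerivAt F fstar tstar)
    (c l : ℕ → ℕ) (hlpos : ∀ n, 0 < l n) (hl : Tendsto l atTop atTop)
    (hcouple : Tendsto (fun n => (c n : ℝ) * (1 - F tstar) ^ l n) atTop (nhds 1))
    (x : ℝ) :
    Tendsto (fun n => (c n : ℝ) * (1 - F (tstar + x / l n)) ^ l n) atTop
      (nhds (Real.exp (-(fstar / (1 - F tstar)) * x))) := by
  set s : ℝ := 1 - F tstar with hs_def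
  have hs : 0 < s := by simp only [hs_def]; linarith
  have hlr : Tendsto (fun n => (l n : ℝ)) atTop atTop := tendsto_natCast_atTop_atTop.comp hl
  have hinv : Tendsto (fun n => x / (l n : ℝ)) atTop (nhds 0) := by
    simpa [div_eq_mul_inv] using hlr.inv_tendsto_atTop.const_mul x
  have ht : Tendsto (fun n => tstar + x / l n) atTop (nhds tstar) := by
    simpa using tendsto_const_nhds.add hinv
  have hFc : ContinuousAt F tstar := hd.continuousAt
  have hpos : ∀ᶠ n in atTop, 0 < 1 - F (tstar + x / l n) :=
    (tendsto_const_nhds.sub (hFc.tendsto.comp ht)).eventually (eventually_gt_nhds hs)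
  set g : ℝ → ℝ := fun t => Real.log (1 - F t) with hg_def
  have hdg : HasDerivAt g (-fstar / s) tstar := by
    have h1' : HasDerivAt (fun t => 1 - F t) (-fstar) tstar := hd.const_sub 1
    simpa using h1'.log (ne_of_gt hs)
  have hslope : Tendsto (fun n => (l n : ℝ) * (g (tstar + x / l n) - g tstar)) atTop
      (nhds (-(fstar / s) * x)) := by
    rcases eq_or_ne x 0 with rfl | hx
    · simp only [zero_div, add_zero, sub_self, mul_zero]
      simpa using (tendsto_const_nhds : Tendsto (fun _ : ℕ => (0:ℝ)) atTop (nhds 0))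
    · have hslope' := hasDerivAt_iff_tendsto_slope.mp hdg
      have htn : Tendsto (fun n => tstar + x / l n) atTop (𝓝[≠] tstar) := by
        refine tendsto_nhdsWithin_of_tendsto_nhds_of_eventually_within _ ht ?_
        filter_upwards with n
        have hln : (0:ℝ) < l n := by exact_mod_cast hlpos n
        have hxl : x / (l n : ℝ) ≠ 0 := div_ne_zero hx (ne_of_gt hln)
        simp only [Set.mem_compl_iff, Set.mem_singleton_iff]
        intro h
        exact hxl (by linarith [h])
      have hcomp := (hslope'.comp htn).const_mul x
      rw [show -(fstar/s) * x = x * (-fstar/s) by ring]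
      refine hcomp.congr' ?_
      filter_upwards with n
      have hln : (0:ℝ) < l n := by exact_mod_cast hlpos n
      have hxl : x / (l n : ℝ) ≠ 0 := div_ne_zero hx (ne_of_gt hln)
      simp only [Function.comp, slope_def_field]
      rw [add_sub_cancel_left]
      field_simp
  -- rewrite c n * (1 - F t_n)^{l n} = (c n * s^{l n}) * exp (l n * (g t_n - g tstar))
  have hexp : Tendsto (fun n => Real.exp ((l n : ℝ) * (g (tstar + x / l n) - g tstar))) atTop
      (nhds (Real.exp (-(fstar / s) * x))) := (Real.continuous_exp.tendsto _).comp hslope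
  have heq : ∀ᶠ n in atTop, (c n : ℝ) * (1 - F (tstar + x / l n)) ^ l n
      = ((c n : ℝ) * s ^ l n) * Real.exp ((l n : ℝ) * (g (tstar + x / l n) - g tstar)) := by
    filter_upwards [hpos] with n hn
    have hgs : g tstar = Real.log s := rfl
    rw [mul_sub, Real.exp_sub, hgs, hg_def]
    simp only
    rw [Real.exp_nat_mul, Real.exp_nat_mul, Real.exp_log hn, Real.exp_log hs]
    have : (0:ℝ) < s ^ l n := pow_pos hs _
    field_simp
  have hlim := hcouple.mul hexp
  rw [one_mul] at hlim
  exact hlim.congr' (heq.mono fun n h => h.symm)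


/-- Convergence of the expected number of scaled row minima in an interval
`(a, b]` to the mean measure of the Poisson process with intensity
`λ(x) = ε̄ exp (-ε̄ x)`, where `ε̄ = F' t* / (1 - F t*)`: under the geometric
coupling `cₙ (1 - F t*)^{lₙ} → 1`,
`cₙ ((1 - F (t* + a/lₙ))^{lₙ} - (1 - F (t* + b/lₙ))^{lₙ}) → exp (-ε̄ a) - exp (-ε̄ b)`,
and this limit equals `∫_a^b ε̄ exp (-ε̄ x) dx`. -/
theorem expected_scaled_row_minima_in_interval
    (F : ℝ → ℝ) (tstar fstar : ℝ)
    (h0 : 0 < F tstar) (h1 : F tstar < 1) (hf : 0 < fstar)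
    (hd : HasDerivAt F fstar tstar)
    (c l : ℕ → ℕ) (hcpos : ∀ n, 0 < c n) (hlpos : ∀ n, 0 < l n)
    (hc : Tendsto c atTop atTop) (hl : Tendsto l atTop atTop)
    (hcouple : Tendsto (fun n => (c n : ℝ) * (1 - F tstar) ^ l n) atTop (nhds 1))
    (a b : ℝ) (hab : a < b) :
    Tendsto (fun n => (c n : ℝ) *
        ((1 - F (tstar + a / l n)) ^ l n - (1 - F (tstar + b / l n)) ^ l n))
      atTop
      (nhds (Real.exp (-(fstar / (1 - F tstar)) * a) -
        Real.exp (-(fstar / (1 - F tstar)) * b))) ∧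
    Real.exp (-(fstar / (1 - F tstar)) * a) - Real.exp (-(fstar / (1 - F tstar)) * b)
      = ∫ x in a..b, (fstar / (1 - F tstar)) * Real.exp (-(fstar / (1 - F tstar)) * x) := by
  set e : ℝ := fstar / (1 - F tstar) with he
  constructor
  · have ha := key_tendsto F tstar fstar h1 hd c l hlpos hl hcouple a
    have hb := key_tendsto F tstar fstar h1 hd c l hlpos hl hcouple b
    have := ha.sub hb
    refine this.congr fun n => ?_
    ring
  · have hderiv : ∀ x ∈ Set.uIcc a b, HasDerivAt (fun y => -Real.exp (-e * y))
        (e * Real.exp (-e * x)) x := by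
      intro x _
      have h1' : HasDerivAt (fun y => -e * y) (-e) x := by
        simpa using (hasDerivAt_id x).const_mul (-e)
      have := (h1'.exp).neg
      simpa [mul_comm, Pi.neg_def] using this
    have hcont : IntervalIntegrable (fun x => e * Real.exp (-e * x)) MeasureTheory.volume a b :=
      (Continuous.intervalIntegrable (by continuity) a b)
    have := intervalIntegral.integral_eq_sub_of_hasDerivAt hderiv hcont
    rw [this]
    ring
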